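/- Let η, τ ∈ ℝ and let ξ′ = (ξ₁,ξ₂) ∈ ℝ² with ξ′ ≠ 0. Define a₊ = (1/2)Γ − i·α₃ and a₋ = (1/2)Γ + i·α₃ where Γ = η·I₄ + τ·α₀ (so Γ = diag((η+τ)·I₂, (η−τ)·I₂)), and set 𝔢₁ = a₊·h₋,₁(ξ′), 𝔢₂ = a₊·h₋,₂(ξ′), 𝔢₃ = a₋·h₊,₁(ξ′), 𝔢₄ = a₋·h₊,₂(ξ′). Then the family (𝔢₁, 𝔢₂, 𝔢₃, 𝔢₄) is linearly independent in ℂ⁴ if and only if η² − τ² ≠ 4. -/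

import Mathlib

open Matrix Complex

noncomputable section

/-- Pauli matrices -/
def σ1 : Matrix (Fin 2) (Fin 2) ℂ := !![0, 1; 1, 0]
def σ2 : Matrix (Fin 2) (Fin 2) ℂ := !![0, -I; I, 0]
def σ3 : Matrix (Fin 2) (Fin 2) ℂ := !![1, 0; 0, -1]

/-- Dirac matrices `α₀`, `α₃`, as 4×4 block matrices indexed by `Fin 2 ⊕ Fin 2`. -/
def α0 : Matrix (Fin 2 ⊕ Fin 2) (Fin 2 ⊕ Fin 2) ℂ := Matrix.fromBlocks 1 0 0 (-1)
def α3 : Matrix (Fin 2 ⊕ Fin 2) (Fin 2 ⊕ Fin 2) ℂ := Matrix.fromBlocks 0 σ3 σ3 0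

/-- `Λ₊(ξ′) = ξ₁σ₁ + ξ₂σ₂ + i|ξ′|σ₃`. -/
def Λp (ξ₁ ξ₂ : ℝ) : Matrix (Fin 2) (Fin 2) ℂ :=
  (ξ₁ : ℂ) • σ1 + (ξ₂ : ℂ) • σ2 + (I * (Real.sqrt (ξ₁ ^ 2 + ξ₂ ^ 2) : ℝ)) • σ3

/-- `Λ₋(ξ′) = ξ₁σ₁ + ξ₂σ₂ − i|ξ′|σ₃`. -/
def Λm (ξ₁ ξ₂ : ℝ) : Matrix (Fin 2) (Fin 2) ℂ :=
  (ξ₁ : ℂ) • σ1 + (ξ₂ : ℂ) • σ2 - (I * (Real.sqrt (ξ₁ ^ 2 + ξ₂ ^ 2) : ℝ)) • σ3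

/-- `e = (1,0) ∈ ℂ²`. -/
def e : Fin 2 → ℂ := ![1, 0]

/-- `h₊,₁, h₊,₂, h₋,₁, h₋,₂ ∈ ℂ⁴`. -/
def hp1 (ξ₁ ξ₂ : ℝ) : (Fin 2 ⊕ Fin 2) → ℂ := Sum.elim ((Λp ξ₁ ξ₂).mulVec e) 0
def hp2 (ξ₁ ξ₂ : ℝ) : (Fin 2 ⊕ Fin 2) → ℂ := Sum.elim 0 ((Λp ξ₁ ξ₂).mulVec e)
def hm1 (ξ₁ ξ₂ : ℝ) : (Fin 2 ⊕ Fin 2) → ℂ := Sum.elim ((Λm ξ₁ ξ₂).mulVec e) 0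
def hm2 (ξ₁ ξ₂ : ℝ) : (Fin 2 ⊕ Fin 2) → ℂ := Sum.elim 0 ((Λm ξ₁ ξ₂).mulVec e)

/-- Interaction matrix of the electrostatic and Lorentz scalar δ-shell:
`Γ = η·I₄ + τ·α₀`. -/
def ΓEL (η τ : ℝ) : Matrix (Fin 2 ⊕ Fin 2) (Fin 2 ⊕ Fin 2) ℂ :=
  (η : ℂ) • 1 + (τ : ℂ) • α0

/-- `a₊ = (1/2)Γ − i·α₃`. -/
def aP (η τ : ℝ) : Matrix (Fin 2 ⊕ Fin 2) (Fin 2 ⊕ Fin 2) ℂ :=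
  (1 / 2 : ℂ) • ΓEL η τ - I • α3

/-- `a₋ = (1/2)Γ + i·α₃`. -/
def aM (η τ : ℝ) : Matrix (Fin 2 ⊕ Fin 2) (Fin 2 ⊕ Fin 2) ℂ :=
  (1 / 2 : ℂ) • ΓEL η τ + I • α3

/-- Auxiliary 4×4 matrix with explicit entries. -/
def LSmat (a b R z : ℂ) : Matrix (Fin 4) (Fin 4) ℂ :=
  !![-(a * I * R), a * z, -R, I * z;
     -R, I * z, -(b * I * R), b * z;
     a * I * R, a * z, -R, -(I * z);
     -R, -(I * z), b * I * R, b * z]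

/-- The sum-to-fin equivalence used for reindexing. -/
def esum : Fin 2 ⊕ Fin 2 ≃ Fin 4 := finSumFinEquiv

@[simp] lemma esum_l0 : esum (Sum.inl (0 : Fin 2)) = (0 : Fin 4) := rfl
@[simp] lemma esum_l1 : esum (Sum.inl (1 : Fin 2)) = (1 : Fin 4) := rfl
@[simp] lemma esum_r0 : esum (Sum.inr (0 : Fin 2)) = (2 : Fin 4) := rfl
@[simp] lemma esum_r1 : esum (Sum.inr (1 : Fin 2)) = (3 : Fin 4) := rfl

@[simp] lemma fin_cs2 : (Fin.castSucc (2 : Fin 3) : Fin 4) = 2 := rfl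
@[simp] lemma fin_sa12 : (Fin.succAbove (1 : Fin 4) (2 : Fin 3)) = 3 := rfl
@[simp] lemma fin_sa22 : (Fin.succAbove (2 : Fin 4) (2 : Fin 3)) = 3 := rfl
@[simp] lemma fin_sa32 : (Fin.succAbove (3 : Fin 4) (2 : Fin 3)) = 2 := rfl

lemma LSdet (a b R z : ℂ) :
    (LSmat a b R z).det = 4 * R ^ 2 * z ^ 2 * (1 - a * b) ^ 2 := by
  simp [LSmat, Matrix.det_succ_row_zero, Fin.sum_univ_succ]
  ring_nf
  simp [Complex.I_sq]

set_option maxHeartbeats 800000 in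
lemma row0 (η τ ξ₁ ξ₂ : ℝ) (j : Fin 2 ⊕ Fin 2) :
    (aP η τ).mulVec (hm1 ξ₁ ξ₂) j
    = LSmat (((η : ℂ) + τ) / 2) (((η : ℂ) - τ) / 2)
        ((Real.sqrt (ξ₁ ^ 2 + ξ₂ ^ 2) : ℝ)) ((ξ₁ : ℂ) + I * ξ₂) 0 (esum j) := by
  rcases j with j | j <;> fin_cases j <;>
  · simp [aP, hm1, Λm, ΓEL, α0, α3, σ1, σ2, σ3, e, LSmat,
      Matrix.mulVec, dotProduct, Fintype.sum_sum_type, Fin.sum_univ_two,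
      Matrix.fromBlocks] <;> ring_nf <;> simp [Complex.I_sq]

set_option maxHeartbeats 800000 in
lemma row1 (η τ ξ₁ ξ₂ : ℝ) (j : Fin 2 ⊕ Fin 2) :
    (aP η τ).mulVec (hm2 ξ₁ ξ₂) j
    = LSmat (((η : ℂ) + τ) / 2) (((η : ℂ) - τ) / 2)
        ((Real.sqrt (ξ₁ ^ 2 + ξ₂ ^ 2) : ℝ)) ((ξ₁ : ℂ) + I * ξ₂) 1 (esum j) := by
  rcases j with j | j <;> fin_cases j <;>
  · simp [aP, hm2, Λm, ΓEL, α0, α3, σ1, σ2, σ3, e, LSmat,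
      Matrix.mulVec, dotProduct, Fintype.sum_sum_type, Fin.sum_univ_two,
      Matrix.fromBlocks] <;> ring_nf <;> simp [Complex.I_sq]

set_option maxHeartbeats 800000 in
lemma row2 (η τ ξ₁ ξ₂ : ℝ) (j : Fin 2 ⊕ Fin 2) :
    (aM η τ).mulVec (hp1 ξ₁ ξ₂) j
    = LSmat (((η : ℂ) + τ) / 2) (((η : ℂ) - τ) / 2)
        ((Real.sqrt (ξ₁ ^ 2 + ξ₂ ^ 2) : ℝ)) ((ξ₁ : ℂ) + I * ξ₂) 2 (esum j) := by
  rcases j with j | j <;> fin_cases j <;>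
  · simp [aM, hp1, Λp, ΓEL, α0, α3, σ1, σ2, σ3, e, LSmat,
      Matrix.mulVec, dotProduct, Fintype.sum_sum_type, Fin.sum_univ_two,
      Matrix.fromBlocks] <;> ring_nf <;> simp [Complex.I_sq]

set_option maxHeartbeats 800000 in
lemma row3 (η τ ξ₁ ξ₂ : ℝ) (j : Fin 2 ⊕ Fin 2) :
    (aM η τ).mulVec (hp2 ξ₁ ξ₂) j
    = LSmat (((η : ℂ) + τ) / 2) (((η : ℂ) - τ) / 2)
        ((Real.sqrt (ξ₁ ^ 2 + ξ₂ ^ 2) : ℝ)) ((ξ₁ : ℂ) + I * ξ₂) 3 (esum j) := by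
  rcases j with j | j <;> fin_cases j <;>
  · simp [aM, hp2, Λp, ΓEL, α0, α3, σ1, σ2, σ3, e, LSmat,
      Matrix.mulVec, dotProduct, Fintype.sum_sum_type, Fin.sum_univ_two,
      Matrix.fromBlocks] <;> ring_nf <;> simp [Complex.I_sq]

/-- Lopatinsky–Shapiro condition for electrostatic + Lorentz scalar shell:
for `ξ′ ≠ 0`, `(𝔢₁, 𝔢₂, 𝔢₃, 𝔢₄)` is linearly independent in `ℂ⁴` iff `η² − τ² ≠ 4`. -/
theorem lopatinsky_shapiro_electrostatic_lorentz (η τ ξ₁ ξ₂ : ℝ)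
    (hξ : ¬(ξ₁ = 0 ∧ ξ₂ = 0)) :
    LinearIndependent ℂ
        ![(aP η τ).mulVec (hm1 ξ₁ ξ₂), (aP η τ).mulVec (hm2 ξ₁ ξ₂),
          (aM η τ).mulVec (hp1 ξ₁ ξ₂), (aM η τ).mulVec (hp2 ξ₁ ξ₂)]
      ↔ η ^ 2 - τ ^ 2 ≠ 4 := by
  set a : ℂ := ((η : ℂ) + τ) / 2 with ha
  set b : ℂ := ((η : ℂ) - τ) / 2 with hb
  set R : ℂ := ((Real.sqrt (ξ₁ ^ 2 + ξ₂ ^ 2) : ℝ) : ℂ) with hR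
  set z : ℂ := (ξ₁ : ℂ) + I * ξ₂ with hz
  set M : Matrix (Fin 2 ⊕ Fin 2) (Fin 2 ⊕ Fin 2) ℂ :=
    (LSmat a b R z).submatrix esum esum with hM
  have hfam : (![(aP η τ).mulVec (hm1 ξ₁ ξ₂), (aP η τ).mulVec (hm2 ξ₁ ξ₂),
          (aM η τ).mulVec (hp1 ξ₁ ξ₂), (aM η τ).mulVec (hp2 ξ₁ ξ₂)] ∘ esum)
      = fun i => M i := by
    funext i j
    rcases i with i | i <;> fin_cases i <;>
      simp only [Function.comp_apply, hM, Matrix.submatrix_apply] <;>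
      [exact row0 η τ ξ₁ ξ₂ j; exact row1 η τ ξ₁ ξ₂ j;
       exact row2 η τ ξ₁ ξ₂ j; exact row3 η τ ξ₁ ξ₂ j]
  rw [← linearIndependent_equiv esum, hfam]
  rw [show (fun i => M i) = M.row from rfl,
    Matrix.linearIndependent_rows_iff_isUnit, hM,
    Matrix.isUnit_iff_isUnit_det, Matrix.det_submatrix_equiv_self, LSdet,
    isUnit_iff_ne_zero]
  have hR2 : R ^ 2 = ((ξ₁ ^ 2 + ξ₂ ^ 2 : ℝ) : ℂ) := by
    rw [hR]
    push_cast [← Complex.ofReal_pow]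
    rw [Real.sq_sqrt (by positivity)]
    push_cast; ring
  have hs : ((ξ₁ ^ 2 + ξ₂ ^ 2 : ℝ) : ℂ) ≠ 0 := by
    rw [Complex.ofReal_ne_zero]
    rcases not_and_or.mp hξ with h | h <;> positivity
  have hzne : z ≠ 0 := by
    rw [hz]
    intro h
    rw [Complex.ext_iff] at h
    simp at h
    exact hξ ⟨h.1, h.2⟩
  have hab : (1 : ℂ) - a * b = (((4 - (η ^ 2 - τ ^ 2)) / 4 : ℝ) : ℂ) := by
    rw [ha, hb]; push_cast; ring
  rw [hR2]
  constructor
  · intro hne heq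
    apply hne
    rw [hab, heq]
    simp
  · intro hne
    have h1 : (1 : ℂ) - a * b ≠ 0 := by
      rw [hab, Complex.ofReal_ne_zero]
      intro h
      apply hne
      field_simp at h
      linarith
    exact mul_ne_zero (mul_ne_zero (mul_ne_zero (by norm_num) hs)
      (pow_ne_zero _ hzne)) (pow_ne_zero _ h1)
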